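/- (Monotonicity under adding a row.) Let λ̄, μ, ν be partitions and r ≥ 0 an integer such that λ = λ̄ ∪ (r) and ν ∪ (r) are partitions (i.e., r fits as an additional part). Then c^{ν∪(r)}_{λ̄∪(r), μ} ≥ c^ν_{λ̄, μ}. -/

import Mathlib

/-- `f` is a partition: weakly decreasing and eventually zero (0-indexed parts). -/
def IsPartition (f : ℕ → ℕ) : Prop :=
  (∀ i j, i ≤ j → f j ≤ f i) ∧ ∃ N, ∀ i, N ≤ i → f i = 0

/-- The partition `f` is contained in the `l × k` rectangle. -/
def InRect (f : ℕ → ℕ) (l k : ℕ) : Prop :=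
  IsPartition f ∧ f 0 ≤ k ∧ ∀ i, l ≤ i → f i = 0

/-- Number of nonzero parts of `f`. -/
noncomputable def numParts (f : ℕ → ℕ) : ℕ := {i | f i ≠ 0}.ncard

/-- Number of distinct nonzero part sizes of `f`. -/
noncomputable def numPartSizes (f : ℕ → ℕ) : ℕ := {n | n ≠ 0 ∧ ∃ i, f i = n}.ncard

/-- The cell `c = (i,j)` (0-indexed) lies in the skew shape `ν/λ`. -/
def InSkew (ν lam : ℕ → ℕ) (c : ℕ × ℕ) : Prop := lam c.1 ≤ c.2 ∧ c.2 < ν c.1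

/-- `c'` strictly precedes `c` in the right-to-left, top-to-bottom reading order. -/
def ReadBefore (c' c : ℕ × ℕ) : Prop := c'.1 < c.1 ∨ (c'.1 = c.1 ∧ c.2 < c'.2)

/-- `T` is a Littlewood–Richardson filling of the skew shape `ν/λ` with content `μ`:
a semistandard filling (positive entries, rows weakly increasing, columns strictly
increasing) whose entry `m+1` occurs `μ m` times, and whose right-to-left,
top-to-bottom reading word is a ballot sequence. -/
def IsLRFilling (lam mu ν : ℕ → ℕ) (T : ℕ × ℕ → ℕ) : Prop :=
  (∀ c, ¬ InSkew ν lam c → T c = 0) ∧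
  (∀ c, InSkew ν lam c → 1 ≤ T c) ∧
  (∀ i j j', InSkew ν lam (i, j) → InSkew ν lam (i, j') → j ≤ j' →
      T (i, j) ≤ T (i, j')) ∧
  (∀ i j, InSkew ν lam (i, j) → InSkew ν lam (i + 1, j) → T (i, j) < T (i + 1, j)) ∧
  (∀ m, {c | InSkew ν lam c ∧ T c = m + 1}.Finite ∧
      {c | InSkew ν lam c ∧ T c = m + 1}.ncard = mu m) ∧
  (∀ c, InSkew ν lam c → ∀ m, 1 ≤ m →
      {c' | InSkew ν lam c' ∧ (ReadBefore c' c ∨ c' = c) ∧ T c' = m + 1}.ncard ≤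
      {c' | InSkew ν lam c' ∧ (ReadBefore c' c ∨ c' = c) ∧ T c' = m}.ncard)

/-- The Littlewood–Richardson coefficient `c^ν_{λ,μ}`. -/
noncomputable def lrCoeff (lam mu ν : ℕ → ℕ) : ℕ :=
  Nat.card {T : ℕ × ℕ → ℕ // IsLRFilling lam mu ν T}

/-- Box `c = (i,j)` of the rectangle lies in `λ` placed at the top-left. -/
def InLam (lam : ℕ → ℕ) (c : ℕ × ℕ) : Prop := c.2 < lam c.1

/-- Box `c = (i,j)` of `l × k` lies in `rotate(μ)`, i.e. `μ` rotated 180° and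
placed at the bottom-right. -/
def InRot (mu : ℕ → ℕ) (l k : ℕ) (c : ℕ × ℕ) : Prop := k - mu (l - 1 - c.1) ≤ c.2

/-- The placements of `λ` (top-left) and `rotate(μ)` (bottom-right) in `l × k`
are disjoint. -/
def DisjointPlace (lam mu : ℕ → ℕ) (l k : ℕ) : Prop :=
  ∀ c : ℕ × ℕ, c.1 < l → c.2 < k → ¬ (InLam lam c ∧ InRot mu l k c)

/-- Column `j` of `l × k` is full for `λ ∪ rotate(μ)`. -/
def FullCol (lam mu : ℕ → ℕ) (l k j : ℕ) : Prop :=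
  ∀ i, i < l → (InLam lam (i, j) ∨ InRot mu l k (i, j))

/-- Row `i` of `l × k` is full for `λ ∪ rotate(μ)`. -/
def FullRow (lam mu : ℕ → ℕ) (l k i : ℕ) : Prop :=
  ∀ j, j < k → (InLam lam (i, j) ∨ InRot mu l k (i, j))

/-- `(λ, μ, l × k)` is a basic Richardson quadruple. -/
def BasicRQ (lam mu : ℕ → ℕ) (l k : ℕ) : Prop :=
  InRect lam l k ∧ InRect mu l k ∧ DisjointPlace lam mu l k ∧
  (∀ j, j < k → ¬ FullCol lam mu l k j) ∧ (∀ i, i < l → ¬ FullRow lam mu l k i)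

/-- The rectangle partition `(g^h)`. -/
def rectP (g h : ℕ) : ℕ → ℕ := fun i => if i < h then g else 0

/-- The hook partition `(b, 1^a)`. -/
def hookP (b a : ℕ) : ℕ → ℕ := fun i => if i = 0 then b else if i ≤ a then 1 else 0

/-- Insert a part of size `r` into the partition `f` in sorted order. -/
noncomputable def insertPart (r : ℕ) (f : ℕ → ℕ) : ℕ → ℕ := fun i =>
  if i < {j | r < f j}.ncard then f i
  else if i = {j | r < f j}.ncard then r
  else f (i - 1)


namespace SAux

lemma ncard_Iio (n : ℕ) : (Set.Iio n : Set ℕ).ncard = n := by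
  rw [← Finset.coe_range, Set.ncard_coe_finset, Finset.card_range]

lemma lower_eq_Iio {S : Set ℕ} (hfin : S.Finite)
    (hlow : ∀ a b : ℕ, a ≤ b → b ∈ S → a ∈ S) : S = Set.Iio S.ncard := by
  ext i
  simp only [Set.mem_Iio]
  constructor
  · intro hi
    have hsub : Set.Iio (i + 1) ⊆ S := fun a ha => hlow a i (Nat.lt_succ_iff.mp ha) hi
    have := Set.ncard_le_ncard hsub hfin
    rw [ncard_Iio] at this; omega
  · intro hi
    by_contra h'
    have hsub : S ⊆ Set.Iio i := by
      intro b hb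
      simp only [Set.mem_Iio]
      by_contra hbi
      exact h' (hlow i b (le_of_not_gt hbi) hb)
    have := Set.ncard_le_ncard hsub (Set.finite_Iio i)
    rw [ncard_Iio] at this; omega

noncomputable def cc (f : ℕ → ℕ) (j : ℕ) : ℕ := {i | j < f i}.ncard

lemma cc_set_finite (f : ℕ → ℕ) (hf : IsPartition f) (j : ℕ) : {i | j < f i}.Finite := by
  obtain ⟨N, hN⟩ := hf.2
  apply Set.Finite.subset (Set.finite_Iio N)
  intro i hi
  simp only [Set.mem_setOf_eq] at hi
  simp only [Set.mem_Iio]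
  by_contra h
  rw [hN i (le_of_not_gt h)] at hi; omega

lemma cc_spec (f : ℕ → ℕ) (hf : IsPartition f) (j : ℕ) :
    {i | j < f i} = Set.Iio (cc f j) :=
  lower_eq_Iio (cc_set_finite f hf j) (fun a b hab hb => lt_of_lt_of_le hb (hf.1 a b hab))

lemma lt_iff_cc {f : ℕ → ℕ} (hf : IsPartition f) {i j : ℕ} : j < f i ↔ i < cc f j := by
  constructor
  · intro h
    have : i ∈ {i | j < f i} := h
    rw [cc_spec f hf j] at this; exact this
  · intro h
    have : i ∈ Set.Iio (cc f j) := h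
    rw [← cc_spec f hf j] at this; exact this

lemma cc_mono {f : ℕ → ℕ} (hf : IsPartition f) {j j' : ℕ} (h : j ≤ j') : cc f j' ≤ cc f j := by
  apply Set.ncard_le_ncard _ (cc_set_finite f hf j)
  intro i hi
  simp only [Set.mem_setOf_eq] at hi ⊢; omega

lemma insertPart_eval_lt {f : ℕ → ℕ} (r i : ℕ) (h : i < cc f r) :
    insertPart r f i = f i := by
  unfold cc at h
  simp only [insertPart]
  rw [if_pos h]

lemma insertPart_eval_eq (f : ℕ → ℕ) (r : ℕ) : insertPart r f (cc f r) = r := by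
  simp only [insertPart, cc]
  simp

lemma insertPart_eval_gt {f : ℕ → ℕ} (r i : ℕ) (h : cc f r < i) :
    insertPart r f i = f (i - 1) := by
  unfold cc at h
  simp only [insertPart]
  rw [if_neg (by omega), if_neg (by omega)]

lemma mem_insert_iff {f : ℕ → ℕ} (hf : IsPartition f) (r j i : ℕ) :
    (j < insertPart r f i) ↔ (if j < r then i ≤ cc f j else i < cc f j) := by
  rcases lt_trichotomy i (cc f r) with hi | hi | hi
  · rw [insertPart_eval_lt r i hi]
    by_cases hjr : j < r
    · rw [if_pos hjr]
      have h1 : cc f r ≤ cc f j := cc_mono hf (by omega)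
      have h2 : j < f i := by
        have : r < f i := (lt_iff_cc hf).mpr hi
        omega
      constructor <;> intro <;> omega
    · rw [if_neg hjr]
      exact lt_iff_cc hf
  · subst hi
    rw [insertPart_eval_eq]
    by_cases hjr : j < r
    · rw [if_pos hjr]
      have h1 : cc f r ≤ cc f j := cc_mono hf (by omega)
      constructor <;> intro <;> omega
    · rw [if_neg hjr]
      have h1 : cc f j ≤ cc f r := cc_mono hf (by omega)
      constructor <;> intro <;> omega
  · rw [insertPart_eval_gt r i hi]
    have key : j < f (i - 1) ↔ i - 1 < cc f j := lt_iff_cc hf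
    by_cases hjr : j < r
    · rw [if_pos hjr]
      have h1 : cc f r ≤ cc f j := cc_mono hf (by omega)
      constructor <;> intro h <;> omega
    · rw [if_neg hjr]
      have h1 : cc f j ≤ cc f r := cc_mono hf (by omega)
      constructor <;> intro h <;> omega

lemma cc_insert {f : ℕ → ℕ} (hf : IsPartition f) (r j : ℕ) :
    cc (insertPart r f) j = if j < r then cc f j + 1 else cc f j := by
  have hset : {i | j < insertPart r f i} = Set.Iio (if j < r then cc f j + 1 else cc f j) := by
    ext i
    simp only [Set.mem_setOf_eq, Set.mem_Iio]
    rw [mem_insert_iff hf r j i]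
    by_cases hjr : j < r
    · rw [if_pos hjr, if_pos hjr]; omega
    · rw [if_neg hjr, if_neg hjr]
  unfold cc
  rw [hset, ncard_Iio]
  rfl

lemma inSkew_iff {lam ν : ℕ → ℕ} (hlam : IsPartition lam) (hν : IsPartition ν) (c : ℕ × ℕ) :
    InSkew ν lam c ↔ cc lam c.2 ≤ c.1 ∧ c.1 < cc ν c.2 := by
  unfold InSkew
  constructor
  · rintro ⟨h1, h2⟩
    refine ⟨?_, (lt_iff_cc hν).mp h2⟩
    by_contra h
    have := (lt_iff_cc hlam).mpr (lt_of_not_ge h)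
    omega
  · rintro ⟨h1, h2⟩
    refine ⟨?_, (lt_iff_cc hν).mpr h2⟩
    by_contra h
    have := (lt_iff_cc hlam).mp (lt_of_not_ge h)
    omega

lemma skew_finite (lam ν : ℕ → ℕ) (hν : IsPartition ν) : {c : ℕ × ℕ | InSkew ν lam c}.Finite := by
  obtain ⟨N, hN⟩ := hν.2
  apply Set.Finite.subset ((Set.finite_Iio N).prod (Set.finite_Iio (ν 0)))
  rintro ⟨a, b⟩ ⟨h1, h2⟩
  simp only [Set.mem_prod, Set.mem_Iio]
  constructor
  · by_contra h
    rw [hN a (le_of_not_gt h)] at h2; omega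
  · exact lt_of_lt_of_le h2 (hν.1 0 a (Nat.zero_le a))

def Phi (r : ℕ) (T : ℕ × ℕ → ℕ) : ℕ × ℕ → ℕ := fun c =>
  if c.2 < r then (match c.1 with | 0 => 0 | Nat.succ a => T (a, c.2)) else T c

lemma Phi_zero (r : ℕ) (T : ℕ × ℕ → ℕ) {j : ℕ} (hj : j < r) : Phi r T (0, j) = 0 := by
  simp [Phi, hj]

lemma Phi_succ (r : ℕ) (T : ℕ × ℕ → ℕ) {a j : ℕ} (hj : j < r) : Phi r T (a + 1, j) = T (a, j) := by
  simp [Phi, hj]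

lemma Phi_ge (r : ℕ) (T : ℕ × ℕ → ℕ) {i j : ℕ} (hj : r ≤ j) : Phi r T (i, j) = T (i, j) := by
  simp [Phi, Nat.not_lt.mpr hj]

section Corr

variable {lamb ν : ℕ → ℕ} {r : ℕ}
variable (hlamb : IsPartition lamb) (hν : IsPartition ν)
variable (h1 : IsPartition (insertPart r lamb)) (h2 : IsPartition (insertPart r ν))

lemma skew_ge (hlamb : IsPartition lamb) (hν : IsPartition ν)
    (h1 : IsPartition (insertPart r lamb)) (h2 : IsPartition (insertPart r ν))
    {i j : ℕ} (hj : r ≤ j) :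
    InSkew (insertPart r ν) (insertPart r lamb) (i, j) ↔ InSkew ν lamb (i, j) := by
  rw [inSkew_iff h1 h2, inSkew_iff hlamb hν]
  have e1 : cc (insertPart r lamb) j = cc lamb j := by
    rw [cc_insert hlamb r j, if_neg (Nat.not_lt.mpr hj)]
  have e2 : cc (insertPart r ν) j = cc ν j := by
    rw [cc_insert hν r j, if_neg (Nat.not_lt.mpr hj)]
  rw [e1, e2]

lemma skew_lt (hlamb : IsPartition lamb) (hν : IsPartition ν)
    (h1 : IsPartition (insertPart r lamb)) (h2 : IsPartition (insertPart r ν))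
    {a j : ℕ} (hj : j < r) :
    InSkew (insertPart r ν) (insertPart r lamb) (a + 1, j) ↔ InSkew ν lamb (a, j) := by
  rw [inSkew_iff h1 h2, inSkew_iff hlamb hν]
  have e1 : cc (insertPart r lamb) j = cc lamb j + 1 := by
    rw [cc_insert hlamb r j, if_pos hj]
  have e2 : cc (insertPart r ν) j = cc ν j + 1 := by
    rw [cc_insert hν r j, if_pos hj]
  rw [e1, e2]
  simp only []
  omega

lemma skew_zero (hlamb : IsPartition lamb) (hν : IsPartition ν)
    (h1 : IsPartition (insertPart r lamb)) (h2 : IsPartition (insertPart r ν))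
    {j : ℕ} (hj : j < r) :
    ¬ InSkew (insertPart r ν) (insertPart r lamb) (0, j) := by
  rw [inSkew_iff h1 h2]
  have e1 : cc (insertPart r lamb) j = cc lamb j + 1 := by
    rw [cc_insert hlamb r j, if_pos hj]
  rw [e1]
  simp only []
  omega

end Corr

/-- generic split of a finite set of cells by a predicate -/
lemma ncard_split (P Q : ℕ × ℕ → Prop) (hfin : {c : ℕ × ℕ | P c}.Finite) :
    {c : ℕ × ℕ | P c}.ncard = {c | P c ∧ Q c}.ncard + {c | P c ∧ ¬ Q c}.ncard := by
  have h1 : {c : ℕ × ℕ | P c ∧ Q c}.Finite := hfin.subset (fun c hc => hc.1)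
  have h2 : {c : ℕ × ℕ | P c ∧ ¬ Q c}.Finite := hfin.subset (fun c hc => hc.1)
  rw [← Set.ncard_union_eq (by rw [Set.disjoint_left]; rintro c ⟨_, hq⟩ ⟨_, hnq⟩; exact hnq hq) h1 h2]
  congr 1
  ext c
  simp only [Set.mem_setOf_eq, Set.mem_union]
  by_cases hq : Q c <;> tauto

lemma sigma_inj : Function.Injective (fun c : ℕ × ℕ => (c.1 + 1, c.2)) := by
  rintro ⟨a, b⟩ ⟨a', b'⟩ h
  simp only [Prod.mk.injEq] at h ⊢
  omega
section Main

variable {lamb ν : ℕ → ℕ} {r : ℕ}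

lemma count_split (hlamb : IsPartition lamb) (hν : IsPartition ν)
    (h1 : IsPartition (insertPart r lamb)) (h2 : IsPartition (insertPart r ν))
    (T : ℕ × ℕ → ℕ) (R : ℕ → Prop) (v : ℕ) :
    {c : ℕ × ℕ | InSkew (insertPart r ν) (insertPart r lamb) c ∧ R c.1 ∧ Phi r T c = v}.ncard
      = {c : ℕ × ℕ | InSkew ν lamb c ∧ R c.1 ∧ r ≤ c.2 ∧ T c = v}.ncard
        + {c : ℕ × ℕ | InSkew ν lamb c ∧ R (c.1 + 1) ∧ c.2 < r ∧ T c = v}.ncard := by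
  have hold : {c : ℕ × ℕ | InSkew ν lamb c}.Finite := skew_finite lamb ν hν
  have key : {c : ℕ × ℕ | InSkew (insertPart r ν) (insertPart r lamb) c ∧ R c.1 ∧ Phi r T c = v}
      = {c : ℕ × ℕ | InSkew ν lamb c ∧ R c.1 ∧ r ≤ c.2 ∧ T c = v}
        ∪ ((fun c : ℕ × ℕ => (c.1 + 1, c.2)) ''
            {c : ℕ × ℕ | InSkew ν lamb c ∧ R (c.1 + 1) ∧ c.2 < r ∧ T c = v}) := by
    ext ⟨a, b⟩
    simp only [Set.mem_setOf_eq, Set.mem_union, Set.mem_image]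
    constructor
    · rintro ⟨hsk, hR, hv⟩
      rcases le_or_gt r b with hb | hb
      · left
        refine ⟨(skew_ge hlamb hν h1 h2 hb).mp hsk, hR, hb, ?_⟩
        rw [← Phi_ge r T hb]; exact hv
      · right
        match a, hsk, hR, hv with
        | 0, hsk, hR, hv => exact absurd hsk (skew_zero hlamb hν h1 h2 hb)
        | Nat.succ a', hsk, hR, hv =>
          exact ⟨(a', b), ⟨(skew_lt hlamb hν h1 h2 hb).mp hsk, hR, hb,
            by rw [← Phi_succ r T hb]; exact hv⟩, rfl⟩
    · rintro (⟨hsk, hR, hb, hv⟩ | ⟨⟨a', b'⟩, ⟨hsk, hR, hb, hv⟩, heq⟩)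
      · exact ⟨(skew_ge hlamb hν h1 h2 hb).mpr hsk, hR, by rw [Phi_ge r T hb]; exact hv⟩
      · simp only [Prod.mk.injEq] at heq
        obtain ⟨rfl, rfl⟩ := heq
        exact ⟨(skew_lt hlamb hν h1 h2 hb).mpr hsk, hR, by rw [Phi_succ r T hb]; exact hv⟩
  rw [key]
  rw [Set.ncard_union_eq ?dis ?f1 ?f2]
  · rw [Set.ncard_image_of_injective _ sigma_inj]
  case dis =>
    rw [Set.disjoint_left]
    rintro ⟨a, b⟩ ⟨_, _, hb, _⟩ ⟨⟨a', b'⟩, hmem, heq⟩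
    simp only [Prod.mk.injEq] at heq
    have : b' < r := hmem.2.2.1
    omega
  case f1 => exact hold.subset (fun c hc => hc.1)
  case f2 => exact (hold.subset (fun c hc => hc.1)).image _

end Main
lemma seteq_ncard {P Q : ℕ × ℕ → Prop} (h : ∀ c, P c ↔ Q c) :
    {c | P c}.ncard = {c | Q c}.ncard := by
  rw [show {c : ℕ × ℕ | P c} = {c | Q c} from Set.ext h]

section OC

variable {lamb mu ν : ℕ → ℕ} {T : ℕ × ℕ → ℕ}

/-- Old row criterion from the per-cell ballot property. -/
lemma OC (hν : IsPartition ν) (hT : IsLRFilling lamb mu ν T) (i m : ℕ) (hm : 1 ≤ m) :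
    {c : ℕ × ℕ | InSkew ν lamb c ∧ c.1 < i + 1 ∧ T c = m + 1}.ncard ≤
    {c : ℕ × ℕ | InSkew ν lamb c ∧ c.1 < i ∧ T c = m}.ncard := by
  have hsh : {c : ℕ × ℕ | InSkew ν lamb c}.Finite := skew_finite lamb ν hν
  rcases Set.eq_empty_or_nonempty {c : ℕ × ℕ | InSkew ν lamb c ∧ c.1 < i + 1 ∧ T c = m + 1}
    with hA | hA
  · rw [hA]; simp
  · have hAfin : {c : ℕ × ℕ | InSkew ν lamb c ∧ c.1 < i + 1 ∧ T c = m + 1}.Finite :=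
      hsh.subset (fun c hc => hc.1)
    obtain ⟨c0, hc0, hmax⟩ := Set.exists_max_image _ (fun c : ℕ × ℕ => c.1) hAfin hA
    obtain ⟨cs, hcsmem, hmin⟩ := Set.exists_min_image
      {c | c ∈ {c : ℕ × ℕ | InSkew ν lamb c ∧ c.1 < i + 1 ∧ T c = m + 1} ∧ c.1 = c0.1}
      (fun c : ℕ × ℕ => c.2) (hAfin.subset (fun c hc => hc.1)) ⟨c0, hc0, rfl⟩
    obtain ⟨cs1, cs2⟩ := cs
    obtain ⟨⟨hcsA, hcslt, hcsv⟩, hcsrow⟩ := hcsmem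
    have hcslt' : cs1 < i + 1 := hcslt
    have hcsrow' : cs1 = c0.1 := hcsrow
    have hcsv' : T (cs1, cs2) = m + 1 := hcsv
    have hball := hT.2.2.2.2.2 (cs1, cs2) hcsA m hm
    have sub1 : {c : ℕ × ℕ | InSkew ν lamb c ∧ c.1 < i + 1 ∧ T c = m + 1} ⊆
        {c' | InSkew ν lamb c' ∧ (ReadBefore c' (cs1, cs2) ∨ c' = (cs1, cs2)) ∧ T c' = m + 1} := by
      rintro ⟨a, b⟩ ⟨hsk, hlt, hv⟩
      refine ⟨hsk, ?_, hv⟩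
      have ha : a ≤ c0.1 := hmax (a, b) ⟨hsk, hlt, hv⟩
      rcases Nat.lt_or_ge a cs1 with h | h
      · exact Or.inl (Or.inl h)
      · have haeq : a = cs1 := by omega
        have hb : cs2 ≤ b := hmin (a, b) ⟨⟨hsk, hlt, hv⟩, show a = c0.1 by omega⟩
        rcases Nat.lt_or_ge cs2 b with h2 | h2
        · exact Or.inl (Or.inr ⟨haeq, h2⟩)
        · right
          have hbe : b = cs2 := by omega
          rw [haeq, hbe]
    have sub2 : {c' | InSkew ν lamb c' ∧ (ReadBefore c' (cs1, cs2) ∨ c' = (cs1, cs2)) ∧ T c' = m} ⊆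
        {c : ℕ × ℕ | InSkew ν lamb c ∧ c.1 < i ∧ T c = m} := by
      rintro ⟨a, b⟩ ⟨hsk, hord, hv⟩
      refine ⟨hsk, ?_, hv⟩
      rcases hord with (h | ⟨heq, hlt2⟩) | heq
      · have h' : a < cs1 := h
        omega
      · exfalso
        have heq' : a = cs1 := heq
        have hlt2' : cs2 < b := hlt2
        subst heq'
        have hrow := hT.2.2.1 a cs2 b hcsA hsk (le_of_lt hlt2')
        rw [hcsv'] at hrow
        have hv' : T (a, b) = m := hv
        omega
      · exfalso
        have : (a, b) = (cs1, cs2) := heq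
        rw [this, hcsv'] at hv
        omega
    calc {c : ℕ × ℕ | InSkew ν lamb c ∧ c.1 < i + 1 ∧ T c = m + 1}.ncard
        ≤ {c' | InSkew ν lamb c' ∧ (ReadBefore c' (cs1, cs2) ∨ c' = (cs1, cs2)) ∧ T c' = m + 1}.ncard :=
          Set.ncard_le_ncard sub1 (hsh.subset (fun c hc => hc.1))
      _ ≤ {c' | InSkew ν lamb c' ∧ (ReadBefore c' (cs1, cs2) ∨ c' = (cs1, cs2)) ∧ T c' = m}.ncard := hball
      _ ≤ {c : ℕ × ℕ | InSkew ν lamb c ∧ c.1 < i ∧ T c = m}.ncard :=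
          Set.ncard_le_ncard sub2 (hsh.subset (fun c hc => hc.1))

end OC
section NC

variable {lamb mu ν : ℕ → ℕ} {T : ℕ × ℕ → ℕ}

lemma row_split (hν : IsPartition ν) (T : ℕ × ℕ → ℕ) (C : ℕ → Prop) (v p : ℕ) :
    {c : ℕ × ℕ | InSkew ν lamb c ∧ c.1 < p + 1 ∧ C c.2 ∧ T c = v}.ncard
      = {c : ℕ × ℕ | InSkew ν lamb c ∧ c.1 < p ∧ C c.2 ∧ T c = v}.ncard
        + {c : ℕ × ℕ | InSkew ν lamb c ∧ c.1 = p ∧ C c.2 ∧ T c = v}.ncard := by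
  rw [ncard_split (fun c => InSkew ν lamb c ∧ c.1 < p + 1 ∧ C c.2 ∧ T c = v)
    (fun c => c.1 < p) ((skew_finite lamb ν hν).subset (fun c hc => hc.1))]
  congr 1
  · apply seteq_ncard
    intro c
    constructor
    · rintro ⟨⟨hA, hB, hC, hD⟩, hE⟩
      exact ⟨hA, hE, hC, hD⟩
    · rintro ⟨hA, hB, hC, hD⟩
      exact ⟨⟨hA, by omega, hC, hD⟩, hB⟩
  · apply seteq_ncard
    intro c
    constructor
    · rintro ⟨⟨hA, hB, hC, hD⟩, hE⟩
      exact ⟨hA, by omega, hC, hD⟩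
    · rintro ⟨hA, hB, hC, hD⟩
      exact ⟨⟨hA, by omega, hC, hD⟩, by omega⟩

lemma col_split (hν : IsPartition ν) (T : ℕ × ℕ → ℕ) (r v p : ℕ) :
    {c : ℕ × ℕ | InSkew ν lamb c ∧ c.1 < p ∧ T c = v}.ncard
      = {c : ℕ × ℕ | InSkew ν lamb c ∧ c.1 < p ∧ r ≤ c.2 ∧ T c = v}.ncard
        + {c : ℕ × ℕ | InSkew ν lamb c ∧ c.1 < p ∧ c.2 < r ∧ T c = v}.ncard := by
  rw [ncard_split (fun c => InSkew ν lamb c ∧ c.1 < p ∧ T c = v)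
    (fun c => r ≤ c.2) ((skew_finite lamb ν hν).subset (fun c hc => hc.1))]
  congr 1
  · apply seteq_ncard
    intro c
    constructor
    · rintro ⟨⟨hA, hB, hD⟩, hE⟩
      exact ⟨hA, hB, hE, hD⟩
    · rintro ⟨hA, hB, hC, hD⟩
      exact ⟨⟨hA, hB, hD⟩, hC⟩
  · apply seteq_ncard
    intro c
    constructor
    · rintro ⟨⟨hA, hB, hD⟩, hE⟩
      exact ⟨hA, hB, by omega, hD⟩
    · rintro ⟨hA, hB, hC, hD⟩
      exact ⟨⟨hA, hB, hD⟩, by omega⟩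

lemma NCmain (r : ℕ) (hlamb : IsPartition lamb) (hν : IsPartition ν)
    (hT : IsLRFilling lamb mu ν T) (m : ℕ) (hm : 1 ≤ m) (i : ℕ) :
    {c : ℕ × ℕ | InSkew ν lamb c ∧ c.1 < i + 2 ∧ r ≤ c.2 ∧ T c = m + 1}.ncard
      + {c : ℕ × ℕ | InSkew ν lamb c ∧ c.1 < i + 1 ∧ c.2 < r ∧ T c = m + 1}.ncard
    ≤ {c : ℕ × ℕ | InSkew ν lamb c ∧ c.1 < i + 1 ∧ r ≤ c.2 ∧ T c = m}.ncard
      + {c : ℕ × ℕ | InSkew ν lamb c ∧ c.1 < i ∧ c.2 < r ∧ T c = m}.ncard := by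
  have hsh : {c : ℕ × ℕ | InSkew ν lamb c}.Finite := skew_finite lamb ν hν
  have OCa := OC hν hT (i + 1) m hm
  have OCb := OC hν hT i m hm
  rw [show i + 1 + 1 = i + 2 from rfl] at OCa
  have e1 := col_split (lamb := lamb) hν T r (m + 1) (i + 2)
  have e2 := col_split (lamb := lamb) hν T r m (i + 1)
  have e3 := col_split (lamb := lamb) hν T r (m + 1) (i + 1)
  have e4 := col_split (lamb := lamb) hν T r m i
  have e5 := row_split (lamb := lamb) hν T (fun j => j < r) (m + 1) (i + 1)
  have e6 := row_split (lamb := lamb) hν T (fun j => j < r) m i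
  have e7 := row_split (lamb := lamb) hν T (fun j => r ≤ j) (m + 1) (i + 1)
  have mono : {c : ℕ × ℕ | InSkew ν lamb c ∧ c.1 < i ∧ r ≤ c.2 ∧ T c = m}.ncard
      ≤ {c : ℕ × ℕ | InSkew ν lamb c ∧ c.1 < i + 1 ∧ r ≤ c.2 ∧ T c = m}.ncard := by
    apply Set.ncard_le_ncard _ (hsh.subset (fun c hc => hc.1))
    rintro ⟨a, b⟩ ⟨hA, hB, hC, hD⟩
    exact ⟨hA, by omega, hC, hD⟩
  rw [show i + 1 + 1 = i + 2 from rfl] at e5 e7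
  by_cases hy0 : {c : ℕ × ℕ | InSkew ν lamb c ∧ c.1 = i ∧ c.2 < r ∧ T c = m}.ncard = 0
  · omega
  · by_cases hx0 : {c : ℕ × ℕ | InSkew ν lamb c ∧ c.1 = i + 1 ∧ r ≤ c.2 ∧ T c = m + 1}.ncard = 0
    · omega
    · -- main geometric case : y ≤ z
      obtain ⟨⟨a1, b1⟩, hsk1, ha1p, hb1p, hv1p⟩ := Set.nonempty_of_ncard_ne_zero hx0
      have ha1 : a1 = i + 1 := ha1p
      subst ha1
      have hb1 : r ≤ b1 := hb1p
      have hv1 : T (i + 1, b1) = m + 1 := hv1p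
      have hyz : {c : ℕ × ℕ | InSkew ν lamb c ∧ c.1 = i ∧ c.2 < r ∧ T c = m}.ncard
          ≤ {c : ℕ × ℕ | InSkew ν lamb c ∧ c.1 = i + 1 ∧ c.2 < r ∧ T c = m + 1}.ncard := by
        apply Set.ncard_le_ncard_of_injOn (fun c => (c.1 + 1, c.2)) ?maps
          sigma_inj.injOn (hsh.subset (fun c hc => hc.1))
        case maps =>
          rintro ⟨a, b⟩ ⟨hsk, hap, hbp, hvp⟩
          have ha : a = i := hap
          subst ha
          have hb : b < r := hbp
          have hv : T (a, b) = m := hvp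
          have hnu : b1 < ν (a + 1) := hsk1.2
          have hskn : InSkew ν lamb (a + 1, b) := by
            constructor
            · exact le_trans (hlamb.1 a (a + 1) (by omega)) hsk.1
            · show b < ν (a + 1)
              omega
          have hle : T (a + 1, b) ≤ T (a + 1, b1) := hT.2.2.1 (a + 1) b b1 hskn hsk1 (by omega)
          have hgt : T (a, b) < T (a + 1, b) := hT.2.2.2.1 a b hsk hskn
          simp only [Set.mem_setOf_eq]
          refine ⟨hskn, trivial, hb, ?_⟩
          show T (a + 1, b) = m + 1
          omega
      omega

end NC
section Assemble

variable {lamb mu ν : ℕ → ℕ} {r : ℕ} {T : ℕ × ℕ → ℕ}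

lemma Phi_isLR (hlamb : IsPartition lamb) (hν : IsPartition ν)
    (h1 : IsPartition (insertPart r lamb)) (h2 : IsPartition (insertPart r ν))
    (hT : IsLRFilling lamb mu ν T) :
    IsLRFilling (insertPart r lamb) mu (insertPart r ν) (Phi r T) := by
  have hsh' : {c : ℕ × ℕ | InSkew (insertPart r ν) (insertPart r lamb) c}.Finite :=
    skew_finite _ _ h2
  have hsh : {c : ℕ × ℕ | InSkew ν lamb c}.Finite := skew_finite _ _ hν
  refine ⟨?_, ?_, ?_, ?_, ?_, ?_⟩
  · -- zero outside
    rintro ⟨a, b⟩ hns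
    by_cases hb : b < r
    · match a with
      | 0 => exact Phi_zero r T hb
      | Nat.succ a' =>
        rw [Phi_succ r T hb]
        exact hT.1 (a', b) (fun hsk => hns ((skew_lt hlamb hν h1 h2 hb).mpr hsk))
    · rw [Phi_ge r T (by omega)]
      exact hT.1 (a, b) (fun hsk => hns ((skew_ge hlamb hν h1 h2 (by omega)).mpr hsk))
  · -- positive on shape
    rintro ⟨a, b⟩ hsk
    by_cases hb : b < r
    · match a with
      | 0 => exact absurd hsk (skew_zero hlamb hν h1 h2 hb)
      | Nat.succ a' =>
        rw [Phi_succ r T hb]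
        exact hT.2.1 (a', b) ((skew_lt hlamb hν h1 h2 hb).mp hsk)
    · rw [Phi_ge r T (by omega)]
      exact hT.2.1 (a, b) ((skew_ge hlamb hν h1 h2 (by omega)).mp hsk)
  · -- rows weakly increasing
    intro a j j' hsk hsk' hjj'
    by_cases hb' : j' < r
    · have hb : j < r := by omega
      match a with
      | 0 => exact absurd hsk (skew_zero hlamb hν h1 h2 hb)
      | Nat.succ a' =>
        rw [Phi_succ r T hb, Phi_succ r T hb']
        exact hT.2.2.1 a' j j' ((skew_lt hlamb hν h1 h2 hb).mp hsk)
          ((skew_lt hlamb hν h1 h2 hb').mp hsk') hjj'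
    · by_cases hb : j < r
      · match a with
        | 0 => exact absurd hsk (skew_zero hlamb hν h1 h2 hb)
        | Nat.succ a' =>
          rw [Phi_succ r T hb, Phi_ge r T (by omega)]
          have s1 : InSkew ν lamb (a', j) := (skew_lt hlamb hν h1 h2 hb).mp hsk
          have s2 : InSkew ν lamb (a' + 1, j') := (skew_ge hlamb hν h1 h2 (by omega)).mp hsk'
          have s3 : InSkew ν lamb (a', j') := by
            constructor
            · exact le_trans s1.1 hjj'
            · have hv1 : j' < ν (a' + 1) := s2.2
              have hv2 : ν (a' + 1) ≤ ν a' := hν.1 a' (a' + 1) (by omega)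
              show j' < ν a'
              omega
          have hA : T (a', j) ≤ T (a', j') := hT.2.2.1 a' j j' s1 s3 hjj'
          have hB : T (a', j') < T (a' + 1, j') := hT.2.2.2.1 a' j' s3 s2
          exact le_trans hA (le_of_lt hB)
      · rw [Phi_ge r T (by omega), Phi_ge r T (by omega)]
        exact hT.2.2.1 a j j' ((skew_ge hlamb hν h1 h2 (by omega)).mp hsk)
          ((skew_ge hlamb hν h1 h2 (by omega)).mp hsk') hjj'
  · -- columns strictly increasing
    intro a j hsk hsk'
    by_cases hb : j < r
    · match a with
      | 0 => exact absurd hsk (skew_zero hlamb hν h1 h2 hb)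
      | Nat.succ a' =>
        rw [Phi_succ r T hb, show a' + 1 + 1 = a' + 2 from rfl, Phi_succ r T hb]
        exact hT.2.2.2.1 a' j ((skew_lt hlamb hν h1 h2 hb).mp hsk)
          ((skew_lt hlamb hν h1 h2 hb).mp hsk')
    · rw [Phi_ge r T (by omega), Phi_ge r T (by omega)]
      exact hT.2.2.2.1 a j ((skew_ge hlamb hν h1 h2 (by omega)).mp hsk)
        ((skew_ge hlamb hν h1 h2 (by omega)).mp hsk')
  · -- content
    intro m
    constructor
    · exact hsh'.subset (fun c hc => hc.1)
    · have hcs := count_split hlamb hν h1 h2 T (fun _ => True) (m + 1)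
      have eL : {c : ℕ × ℕ | InSkew (insertPart r ν) (insertPart r lamb) c ∧ True ∧
          Phi r T c = m + 1}.ncard
          = {c : ℕ × ℕ | InSkew (insertPart r ν) (insertPart r lamb) c ∧
              Phi r T c = m + 1}.ncard := by
        apply seteq_ncard; intro c; constructor
        · rintro ⟨hA, _, hB⟩; exact ⟨hA, hB⟩
        · rintro ⟨hA, hB⟩; exact ⟨hA, trivial, hB⟩
      have eR1 : {c : ℕ × ℕ | InSkew ν lamb c ∧ True ∧ r ≤ c.2 ∧ T c = m + 1}.ncard
          = {c : ℕ × ℕ | (InSkew ν lamb c ∧ T c = m + 1) ∧ r ≤ c.2}.ncard := by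
        apply seteq_ncard; intro c; constructor
        · rintro ⟨hA, _, hB, hC⟩; exact ⟨⟨hA, hC⟩, hB⟩
        · rintro ⟨⟨hA, hC⟩, hB⟩; exact ⟨hA, trivial, hB, hC⟩
      have eR2 : {c : ℕ × ℕ | InSkew ν lamb c ∧ True ∧ c.2 < r ∧ T c = m + 1}.ncard
          = {c : ℕ × ℕ | (InSkew ν lamb c ∧ T c = m + 1) ∧ ¬ r ≤ c.2}.ncard := by
        apply seteq_ncard; intro c; constructor
        · rintro ⟨hA, _, hB, hC⟩; exact ⟨⟨hA, hC⟩, by omega⟩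
        · rintro ⟨⟨hA, hC⟩, hB⟩; exact ⟨hA, trivial, by omega, hC⟩
      have hold := ncard_split (fun c => InSkew ν lamb c ∧ T c = m + 1) (fun c => r ≤ c.2)
        (hsh.subset (fun c hc => hc.1))
      have hcontent := (hT.2.2.2.2.1 m).2
      omega
  · -- ballot
    have NCfull : ∀ m, 1 ≤ m → ∀ i,
        {c : ℕ × ℕ | InSkew (insertPart r ν) (insertPart r lamb) c ∧ c.1 < i + 1 ∧
          Phi r T c = m + 1}.ncard ≤
        {c : ℕ × ℕ | InSkew (insertPart r ν) (insertPart r lamb) c ∧ c.1 < i ∧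
          Phi r T c = m}.ncard := by
      intro m hm i
      have hcs1 := count_split hlamb hν h1 h2 T (fun n => n < i + 1) (m + 1)
      have hcs2 := count_split hlamb hν h1 h2 T (fun n => n < i) m
      obtain _ | i' := i
      ·
        have hOC := OC hν hT 0 m hm
        have hzA : {c : ℕ × ℕ | InSkew ν lamb c ∧ c.1 < 0 ∧ T c = m} = ∅ := by
          ext c
          simp only [Set.mem_setOf_eq, Set.mem_empty_iff_false, iff_false]
          rintro ⟨_, hb, _⟩
          omega
        have hzB : {c : ℕ × ℕ | InSkew ν lamb c ∧ c.1 + 1 < 0 + 1 ∧ c.2 < r ∧ T c = m + 1}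
            = ∅ := by
          ext c
          simp only [Set.mem_setOf_eq, Set.mem_empty_iff_false, iff_false]
          rintro ⟨_, hb, _⟩
          omega
        have hsub : {c : ℕ × ℕ | InSkew ν lamb c ∧ c.1 < 0 + 1 ∧ r ≤ c.2 ∧ T c = m + 1}.ncard
            ≤ {c : ℕ × ℕ | InSkew ν lamb c ∧ c.1 < 0 + 1 ∧ T c = m + 1}.ncard := by
          apply Set.ncard_le_ncard _ (hsh.subset (fun c hc => hc.1))
          rintro c ⟨hA, hB, hC, hD⟩; exact ⟨hA, hB, hD⟩
        rw [hzA] at hOC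
        rw [hzB] at hcs1
        simp only [Set.ncard_empty] at hOC hcs1
        omega
      · have hmain := NCmain r hlamb hν hT m hm i'
        have eA : {c : ℕ × ℕ | InSkew ν lamb c ∧ c.1 < i' + 1 + 1 ∧ r ≤ c.2 ∧ T c = m + 1}.ncard
            = {c : ℕ × ℕ | InSkew ν lamb c ∧ c.1 < i' + 2 ∧ r ≤ c.2 ∧ T c = m + 1}.ncard := by
          apply seteq_ncard; intro c; constructor
          · rintro ⟨hA, hB, hC, hD⟩; exact ⟨hA, by omega, hC, hD⟩
          · rintro ⟨hA, hB, hC, hD⟩; exact ⟨hA, by omega, hC, hD⟩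
        have eB : {c : ℕ × ℕ | InSkew ν lamb c ∧ c.1 + 1 < i' + 1 + 1 ∧ c.2 < r ∧
            T c = m + 1}.ncard
            = {c : ℕ × ℕ | InSkew ν lamb c ∧ c.1 < i' + 1 ∧ c.2 < r ∧ T c = m + 1}.ncard := by
          apply seteq_ncard; intro c; constructor
          · rintro ⟨hA, hB, hC, hD⟩; exact ⟨hA, by omega, hC, hD⟩
          · rintro ⟨hA, hB, hC, hD⟩; exact ⟨hA, by omega, hC, hD⟩
        have eC : {c : ℕ × ℕ | InSkew ν lamb c ∧ c.1 + 1 < i' + 1 ∧ c.2 < r ∧ T c = m}.ncard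
            = {c : ℕ × ℕ | InSkew ν lamb c ∧ c.1 < i' ∧ c.2 < r ∧ T c = m}.ncard := by
          apply seteq_ncard; intro c; constructor
          · rintro ⟨hA, hB, hC, hD⟩; exact ⟨hA, by omega, hC, hD⟩
          · rintro ⟨hA, hB, hC, hD⟩; exact ⟨hA, by omega, hC, hD⟩
        omega
    rintro c hsk m hm
    have hfin1 : {c' | InSkew (insertPart r ν) (insertPart r lamb) c' ∧
        (ReadBefore c' c ∨ c' = c) ∧ Phi r T c' = m}.Finite := hsh'.subset (fun d hd => hd.1)
    have sub1 : {c' | InSkew (insertPart r ν) (insertPart r lamb) c' ∧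
        (ReadBefore c' c ∨ c' = c) ∧ Phi r T c' = m + 1} ⊆
        {d : ℕ × ℕ | InSkew (insertPart r ν) (insertPart r lamb) d ∧ d.1 < c.1 + 1 ∧
          Phi r T d = m + 1} := by
      rintro d ⟨hA, hB, hC⟩
      refine ⟨hA, ?_, hC⟩
      rcases hB with (h | ⟨h, _⟩) | h
      · omega
      · omega
      · rw [h]; omega
    have sub2 : {d : ℕ × ℕ | InSkew (insertPart r ν) (insertPart r lamb) d ∧ d.1 < c.1 ∧
        Phi r T d = m} ⊆
        {c' | InSkew (insertPart r ν) (insertPart r lamb) c' ∧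
          (ReadBefore c' c ∨ c' = c) ∧ Phi r T c' = m} := by
      rintro d ⟨hA, hB, hC⟩
      exact ⟨hA, Or.inl (Or.inl hB), hC⟩
    calc {c' | InSkew (insertPart r ν) (insertPart r lamb) c' ∧
          (ReadBefore c' c ∨ c' = c) ∧ Phi r T c' = m + 1}.ncard
        ≤ {d : ℕ × ℕ | InSkew (insertPart r ν) (insertPart r lamb) d ∧ d.1 < c.1 + 1 ∧
            Phi r T d = m + 1}.ncard :=
          Set.ncard_le_ncard sub1 (hsh'.subset (fun d hd => hd.1))
      _ ≤ {d : ℕ × ℕ | InSkew (insertPart r ν) (insertPart r lamb) d ∧ d.1 < c.1 ∧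
            Phi r T d = m}.ncard := NCfull m hm c.1
      _ ≤ _ := Set.ncard_le_ncard sub2 hfin1

lemma fillings_finite (lam mu ν : ℕ → ℕ) (hν : IsPartition ν) (hmu : IsPartition mu) :
    Finite {T : ℕ × ℕ → ℕ // IsLRFilling lam mu ν T} := by
  obtain ⟨N, hN⟩ := hmu.2
  have hsh := skew_finite lam ν hν
  haveI : Finite {c : ℕ × ℕ // InSkew ν lam c} := hsh.to_subtype
  have hbound : ∀ (T : {T : ℕ × ℕ → ℕ // IsLRFilling lam mu ν T}) c, T.1 c < N + 1 := by
    intro T c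
    rcases h' : T.1 c with _ | v
    · omega
    · by_contra hc
      have hmv : mu v = 0 := hN v (by omega)
      have hcont := T.2.2.2.2.2.1 v
      have hemp : {c | InSkew ν lam c ∧ T.1 c = v + 1} = ∅ :=
        (Set.ncard_eq_zero hcont.1).mp (by rw [hcont.2, hmv])
      have hskc : InSkew ν lam c := by
        by_contra hn
        rw [T.2.1 c hn] at h'
        exact Nat.noConfusion h'
      have : c ∈ ({c | InSkew ν lam c ∧ T.1 c = v + 1} : Set _) := ⟨hskc, h'⟩
      rw [hemp] at this
      exact this
  apply Finite.of_injective
    (fun (T : {T : ℕ × ℕ → ℕ // IsLRFilling lam mu ν T})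
      (c : {c : ℕ × ℕ // InSkew ν lam c}) => (⟨T.1 c.1, hbound T c.1⟩ : Fin (N + 1)))
  intro T T' h
  apply Subtype.ext
  funext c
  by_cases hc : InSkew ν lam c
  · have := congrFun h ⟨c, hc⟩
    exact congrArg Fin.val this
  · rw [T.2.1 c hc, T'.2.1 c hc]

end Assemble
end SAux

/-- Monotonicity of LR coefficients under adding a row:
`c^{ν ∪ (r)}_{λ̄ ∪ (r), μ} ≥ c^ν_{λ̄, μ}`. -/
theorem stmt5 (lamb mu ν : ℕ → ℕ) (r : ℕ)
    (hlamb : IsPartition lamb) (hmu : IsPartition mu) (hν : IsPartition ν)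
    (h1 : IsPartition (insertPart r lamb)) (h2 : IsPartition (insertPart r ν)) :
    lrCoeff lamb mu ν ≤ lrCoeff (insertPart r lamb) mu (insertPart r ν) := by
  haveI := SAux.fillings_finite (insertPart r lamb) mu (insertPart r ν) h2 hmu
  unfold lrCoeff
  apply Nat.card_le_card_of_injective
    (fun (T : {T : ℕ × ℕ → ℕ // IsLRFilling lamb mu ν T}) =>
      (⟨SAux.Phi r T.1, SAux.Phi_isLR hlamb hν h1 h2 T.2⟩ :
        {T : ℕ × ℕ → ℕ // IsLRFilling (insertPart r lamb) mu (insertPart r ν) T}))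
  intro T T' h
  apply Subtype.ext
  have h' : SAux.Phi r T.1 = SAux.Phi r T'.1 := congrArg Subtype.val h
  funext c
  obtain ⟨a, b⟩ := c
  by_cases hb : b < r
  · have := congrFun h' (a + 1, b)
    rw [SAux.Phi_succ r _ hb, SAux.Phi_succ r _ hb] at this
    exact this
  · have := congrFun h' (a, b)
    rw [SAux.Phi_ge r _ (by omega), SAux.Phi_ge r _ (by omega)] at this
    exact this
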